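/- Any finite congruence-simple semiring R with RR ≠ {0} admits a finite irreducible semimodule. -/

import Mathlib

section Aux

variable {R : Type} [NonUnitalSemiring R]

/-- Left faithfulness: in a congruence-simple semiring with `RR ≠ 0`,
`Rx = 0` implies `x = 0`. -/
theorem aux_left_faithful
    (hsimple : ∀ c : RingCon R, (∀ x y : R, c x y → x = y) ∨ (∀ x y : R, c x y))
    (hRR : ∃ x y : R, x * y ≠ 0) :
    ∀ x : R, (∀ r : R, r * x = 0) → x = 0 := by
  classical
  let c : RingCon R :=
    { r := fun a b => ∀ r : R, r * a = r * b
      iseqv := ⟨fun a r => rfl, fun h r => (h r).symm, fun h1 h2 r => (h1 r).trans (h2 r)⟩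
      mul' := by
        intro w x y z h1 h2 r
        calc r * (w * y) = (r * w) * y := (mul_assoc _ _ _).symm
          _ = (r * x) * y := by rw [h1 r]
          _ = (r * x) * z := h2 (r * x)
          _ = r * (x * z) := mul_assoc _ _ _
      add' := by
        intro w x y z h1 h2 r
        rw [mul_add, mul_add, h1 r, h2 r] }
  rcases hsimple c with h | h
  · intro x hx
    exact h x 0 (fun r => by rw [hx r, mul_zero])
  · exfalso
    obtain ⟨a, b, hab⟩ := hRR
    exact hab ((h b 0 a).trans (mul_zero a))

end Aux

/-- Any finite congruence-simple semiring `R` with `R·R ≠ {0}` admits a finite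
irreducible semimodule: a finite commutative monoid `M` with a representation
`T : R → End M` such that `R·M ≠ {0}`, `M` has only trivial subsemimodules,
and `M` has only trivial semimodule congruences. -/
theorem finite_congruenceSimple_admits_irreducible_semimodule {R : Type}
    [NonUnitalSemiring R] [Fintype R]
    (hsimple : ∀ c : RingCon R, (∀ x y : R, c x y → x = y) ∨ (∀ x y : R, c x y))
    (hRR : ∃ x y : R, x * y ≠ 0) :
    ∃ (M : Type) (_ : AddCommMonoid M) (_ : Fintype M) (T : R →ₙ+* AddMonoid.End M),
      (∃ (r : R) (x : M), T r x ≠ 0) ∧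
      (∀ N : AddSubmonoid M, (∀ (r : R), ∀ x ∈ N, T r x ∈ N) → N = ⊥ ∨ N = ⊤) ∧
      (∀ c : AddCon M, (∀ (r : R) (x y : M), c x y → c (T r x) (T r y)) →
        (∀ x y : M, c x y → x = y) ∨ (∀ x y : M, c x y)) := by
  classical
  have hfaith : ∀ x : R, (∀ r : R, r * x = 0) → x = 0 := aux_left_faithful hsimple hRR
  -- "good" submonoids: closed under the action, with nonzero action
  let good : AddSubmonoid R → Prop := fun S =>
    (∀ (r : R), ∀ x ∈ S, r * x ∈ S) ∧ ∃ (r x : R), x ∈ S ∧ r * x ≠ 0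
  have hgood_top : good ⊤ := by
    refine ⟨fun r x _ => trivial, ?_⟩
    obtain ⟨a, b, h⟩ := hRR
    exact ⟨a, b, trivial, h⟩
  have hex : ∃ n : ℕ, ∃ S : AddSubmonoid R, good S ∧ (S : Set R).ncard = n :=
    ⟨_, ⊤, hgood_top, rfl⟩
  obtain ⟨N, hNgood, hNcard⟩ := Nat.find_spec hex
  have hmincard : ∀ S : AddSubmonoid R, good S → Nat.find hex ≤ (S : Set R).ncard :=
    fun S hS => Nat.find_min' hex ⟨S, hS, rfl⟩
  have hmin : ∀ Q : AddSubmonoid R, Q ≤ N → good Q → Q = N := by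
    intro Q hQle hQ
    by_contra hne
    have hss : (Q : Set R) ⊂ (N : Set R) := SetLike.coe_ssubset_coe.mpr (lt_of_le_of_ne hQle hne)
    have hlt : (Q : Set R).ncard < (N : Set R).ncard :=
      Set.ncard_lt_ncard hss (Set.toFinite _)
    have := hmincard Q hQ
    omega
  -- N is generated by products r * y with y ∈ N
  set S₀ : Set R := {x : R | ∃ (r y : R), y ∈ N ∧ x = r * y} with hS₀def
  have hS₀N : AddSubmonoid.closure S₀ ≤ N := by
    refine AddSubmonoid.closure_le.mpr ?_
    rintro x ⟨r, y, hy, rfl⟩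
    exact hNgood.1 r y hy
  have hclosgood : good (AddSubmonoid.closure S₀) := by
    constructor
    · intro r x hx
      induction hx using AddSubmonoid.closure_induction with
      | mem z hz =>
        obtain ⟨s, y, hy, rfl⟩ := hz
        exact AddSubmonoid.subset_closure ⟨r * s, y, hy, (mul_assoc r s y).symm⟩
      | zero => simpa [mul_zero] using AddSubmonoid.zero_mem _
      | add a b _ _ ha hb => simpa [mul_add] using AddSubmonoid.add_mem _ ha hb
    · obtain ⟨r, x, hxN, hrx⟩ := hNgood.2
      have : ∃ s : R, s * (r * x) ≠ 0 := by
        by_contra hs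
        push_neg at hs
        exact hrx (hfaith _ hs)
      obtain ⟨s, hs⟩ := this
      exact ⟨s, r * x, AddSubmonoid.subset_closure ⟨r, x, hxN, rfl⟩, hs⟩
  have hclos : AddSubmonoid.closure S₀ = N := hmin _ hS₀N hclosgood
  -- generation principle
  have hgen : ∀ p : R → Prop, (∀ r y, y ∈ N → p (r * y)) → p 0 →
      (∀ a b, p a → p b → p (a + b)) → ∀ x ∈ N, p x := by
    intro p hmem h0 hadd x hx
    rw [← hclos] at hx
    induction hx using AddSubmonoid.closure_induction with
    | mem z hz => obtain ⟨r, y, hy, rfl⟩ := hz; exact hmem r y hy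
    | zero => exact h0
    | add a b _ _ ha hb => exact hadd a b ha hb
  -- the action on ↥N
  let φ : R → (↥N →+ ↥N) := fun r =>
    { toFun := fun x => ⟨r * (x : R), hNgood.1 r x x.2⟩
      map_zero' := Subtype.ext (mul_zero r)
      map_add' := fun x y => Subtype.ext (mul_add r x y) }
  -- compatible congruences on ↥N
  let compat : AddCon ↥N → Prop := fun c => ∀ (r : R) (x y : ↥N), c x y → c (φ r x) (φ r y)
  let 𝒮 : Set (AddCon ↥N) := {c | compat c ∧ ¬ ∀ x y, c x y}
  have hfinCon : Finite (AddCon ↥N) :=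
    Finite.of_injective (fun c : AddCon ↥N => ⇑c) DFunLike.coe_injective
  -- the identity congruence is proper and compatible
  let cEq : AddCon ↥N :=
    { r := fun a b => a = b
      iseqv := eq_equivalence
      add' := fun h1 h2 => by rw [h1, h2] }
  have hcEq : cEq ∈ 𝒮 := by
    refine ⟨fun r x y h => by have hxy : x = y := h; rw [hxy]; exact rfl, ?_⟩
    intro hall
    obtain ⟨r, x, hxN, hrx⟩ := hNgood.2
    have : (⟨x, hxN⟩ : ↥N) = 0 := hall _ _
    apply hrx
    rw [show x = (0 : R) from congrArg Subtype.val this, mul_zero]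
  obtain ⟨θ, hθS, hθmax⟩ := Set.Finite.exists_maximalFor id 𝒮 (Set.toFinite 𝒮) ⟨cEq, hcEq⟩
  have hθcompat : compat θ := hθS.1
  have hθproper : ¬ ∀ x y : ↥N, θ x y := hθS.2
  -- the quotient semimodule
  let T' : R → AddMonoid.End θ.Quotient := fun r =>
    AddCon.lift θ (θ.mk'.comp (φ r)) (by
      intro x y h
      show θ.mk' (φ r x) = θ.mk' (φ r y)
      exact (θ.eq).mpr (hθcompat r x y h))
  have hT' : ∀ (r : R) (x : ↥N), T' r ((x : θ.Quotient)) = ((φ r x : ↥N) : θ.Quotient) :=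
    fun r x => AddCon.lift_coe _ _
  let T : R →ₙ+* AddMonoid.End θ.Quotient :=
    { toFun := T'
      map_mul' := by
        intro r s
        refine AddMonoidHom.ext fun a => ?_
        induction a using AddCon.induction_on with
        | H x =>
          show T' (r * s) (x : θ.Quotient) = T' r (T' s (x : θ.Quotient))
          rw [hT', hT', hT']
          congr 1
          exact Subtype.ext (mul_assoc r s (x : R))
      map_zero' := by
        refine AddMonoidHom.ext fun a => ?_
        induction a using AddCon.induction_on with
        | H x =>
          show T' 0 (x : θ.Quotient) = 0
          rw [hT']
          have : φ 0 x = 0 := Subtype.ext (zero_mul (x : R))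
          rw [this]
          exact map_zero θ.mk'
      map_add' := by
        intro r s
        refine AddMonoidHom.ext fun a => ?_
        induction a using AddCon.induction_on with
        | H x =>
          show T' (r + s) (x : θ.Quotient) = T' r (x : θ.Quotient) + T' s (x : θ.Quotient)
          rw [hT', hT', hT']
          have : φ (r + s) x = φ r x + φ s x := Subtype.ext (add_mul r s (x : R))
          rw [this]
          exact map_add θ.mk' _ _ }
  have hTapp : ∀ (r : R) (x : ↥N), T r ((x : θ.Quotient)) = ((φ r x : ↥N) : θ.Quotient) := hT'
  -- bullet 1 : R·M ≠ 0
  have hRM : ∃ (r : R) (a : θ.Quotient), T r a ≠ 0 := by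
    by_contra h
    push_neg at h
    have hall : ∀ x : ↥N, θ x 0 := by
      intro x
      have key := hgen (fun z => ∃ hz : z ∈ N, θ ⟨z, hz⟩ 0) ?_ ?_ ?_ (x : R) x.2
      · obtain ⟨hz, hθz⟩ := key
        have : (⟨(x : R), hz⟩ : ↥N) = x := Subtype.ext rfl
        rwa [this] at hθz
      · intro r y hy
        refine ⟨hNgood.1 r y hy, ?_⟩
        have h0 : T r ((⟨y, hy⟩ : ↥N) : θ.Quotient) = 0 := h r _
        rw [hTapp] at h0
        have : ((φ r ⟨y, hy⟩ : ↥N) : θ.Quotient) = ((0 : ↥N) : θ.Quotient) := by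
          rw [h0]; exact (map_zero θ.mk').symm
        exact (θ.eq).mp this
      · exact ⟨N.zero_mem, by exact θ.refl 0⟩
      · rintro a b ⟨ha, hθa⟩ ⟨hb, hθb⟩
        refine ⟨N.add_mem ha hb, ?_⟩
        have := θ.add hθa hθb
        simpa using this
    exact hθproper fun x y => θ.trans (hall x) (θ.symm (hall y))
  -- bullet 3 : congruence simplicity
  have hcong : ∀ c : AddCon θ.Quotient,
      (∀ (r : R) (x y : θ.Quotient), c x y → c (T r x) (T r y)) →
      (∀ x y : θ.Quotient, c x y → x = y) ∨ (∀ x y : θ.Quotient, c x y) := by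
    intro c hc
    let θ' : AddCon ↥N :=
      { r := fun x y => c (x : θ.Quotient) (y : θ.Quotient)
        iseqv := ⟨fun x => c.refl _, fun h => c.symm h, fun h1 h2 => c.trans h1 h2⟩
        add' := fun {w x y z} h1 h2 => by
          have := c.add h1 h2
          simpa using this }
    by_cases hfull : ∀ x y : ↥N, θ' x y
    · right
      intro a b
      induction a using AddCon.induction_on with
      | H x =>
        induction b using AddCon.induction_on with
        | H y => exact hfull x y
    · left
      have hθ'compat : compat θ' := by
        intro r x y h
        have := hc r _ _ h
        rw [hTapp, hTapp] at this
        exact this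
      have hle : θ ≤ θ' := by
        intro x y h
        show c (x : θ.Quotient) (y : θ.Quotient)
        rw [(θ.eq).mpr h]; exact c.refl _
      have heq : θ = θ' := le_antisymm hle (hθmax (j := θ') ⟨hθ'compat, hfull⟩ hle)
      intro a b hab
      induction a using AddCon.induction_on with
      | H x =>
        induction b using AddCon.induction_on with
        | H y =>
          have : θ x y := heq ▸ (hab : θ' x y)
          exact (θ.eq).mpr this
  -- bullet 2 : submodule simplicity
  have hsub : ∀ P : AddSubmonoid θ.Quotient, (∀ (r : R), ∀ a ∈ P, T r a ∈ P) →
      P = ⊥ ∨ P = ⊤ := by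
    intro P hP
    by_contra hcon
    push_neg at hcon
    obtain ⟨hPbot, hPtop⟩ := hcon
    -- pull P back to a submonoid of R
    let QR : AddSubmonoid R :=
      { carrier := {z : R | ∃ hz : z ∈ N, ((⟨z, hz⟩ : ↥N) : θ.Quotient) ∈ P}
        zero_mem' := ⟨N.zero_mem, by
          have : ((⟨(0 : R), N.zero_mem⟩ : ↥N) : θ.Quotient) = 0 := by
            rw [show (⟨(0 : R), N.zero_mem⟩ : ↥N) = 0 from Subtype.ext rfl]
            exact map_zero θ.mk'
          rw [this]; exact P.zero_mem⟩
        add_mem' := by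
          rintro a b ⟨ha, hPa⟩ ⟨hb, hPb⟩
          refine ⟨N.add_mem ha hb, ?_⟩
          have : ((⟨a + b, N.add_mem ha hb⟩ : ↥N) : θ.Quotient)
              = ((⟨a, ha⟩ : ↥N) : θ.Quotient) + ((⟨b, hb⟩ : ↥N) : θ.Quotient) := by
            rw [show (⟨a + b, N.add_mem ha hb⟩ : ↥N) = ⟨a, ha⟩ + ⟨b, hb⟩ from Subtype.ext rfl]
            exact map_add θ.mk' _ _
          rw [this]; exact P.add_mem hPa hPb }
    have hQRact : ∀ (r : R), ∀ z ∈ QR, r * z ∈ QR := by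
      rintro r z ⟨hz, hPz⟩
      refine ⟨hNgood.1 r z hz, ?_⟩
      have : ((⟨r * z, hNgood.1 r z hz⟩ : ↥N) : θ.Quotient)
          = T r ((⟨z, hz⟩ : ↥N) : θ.Quotient) := by
        rw [hTapp]; rfl
      rw [this]
      exact hP r _ hPz
    have hQRnotgood : ¬ good QR := by
      intro hg
      have hQN : QR ≤ N := fun z hz => hz.1
      have hQeq : QR = N := hmin QR hQN hg
      apply hPtop
      rw [eq_top_iff]
      intro a _
      induction a using AddCon.induction_on with
      | H x =>
        have hx : (x : R) ∈ QR := by rw [hQeq]; exact x.2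
        obtain ⟨hz, hPz⟩ := hx
        rwa [show (⟨(x : R), hz⟩ : ↥N) = x from Subtype.ext rfl] at hPz
    have hzero : ∀ (r : R), ∀ z ∈ QR, r * z = 0 := by
      by_contra hzc
      push_neg at hzc
      obtain ⟨r, z, hz, hrz⟩ := hzc
      exact hQRnotgood ⟨hQRact, r, z, hz, hrz⟩
    have hz0 : ∀ (r : R), ∀ a ∈ P, T r a = 0 := by
      intro r a ha
      induction a using AddCon.induction_on with
      | H x =>
        rw [hTapp]
        have hxQ : (x : R) ∈ QR := ⟨x.2, by
          rwa [show (⟨(x : R), x.2⟩ : ↥N) = x from Subtype.ext rfl]⟩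
        have : φ r x = 0 := Subtype.ext (hzero r (x : R) hxQ)
        rw [this]
        exact map_zero θ.mk'
    -- the Bourne congruence of P
    let cB : AddCon θ.Quotient :=
      { r := fun a b => ∃ p ∈ P, ∃ q ∈ P, a + p = b + q
        iseqv := by
          refine ⟨fun a => ⟨0, P.zero_mem, 0, P.zero_mem, rfl⟩, ?_, ?_⟩
          · rintro a b ⟨p, hp, q, hq, h⟩
            exact ⟨q, hq, p, hp, h.symm⟩
          · rintro a b d ⟨p, hp, q, hq, h1⟩ ⟨p', hp', q', hq', h2⟩
            refine ⟨p + p', P.add_mem hp hp', q' + q, P.add_mem hq' hq, ?_⟩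
            calc a + (p + p') = (a + p) + p' := (add_assoc _ _ _).symm
              _ = (b + q) + p' := by rw [h1]
              _ = (b + p') + q := by rw [add_assoc, add_assoc, add_comm q p']
              _ = (d + q') + q := by rw [h2]
              _ = d + (q' + q) := add_assoc _ _ _
        add' := by
          rintro w x y z ⟨p, hp, q, hq, h1⟩ ⟨p', hp', q', hq', h2⟩
          refine ⟨p + p', P.add_mem hp hp', q + q', P.add_mem hq hq', ?_⟩
          calc w + y + (p + p') = (w + p) + (y + p') := by
                rw [add_assoc, add_assoc, add_left_comm y p p']
            _ = (x + q) + (z + q') := by rw [h1, h2]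
            _ = x + z + (q + q') := by
                rw [add_assoc, add_assoc, add_left_comm z q q'] }
    have hTcB : ∀ (r : R) (a b : θ.Quotient), cB a b → T r a = T r b := by
      rintro r a b ⟨p, hp, q, hq, h⟩
      have := congrArg (T r) h
      rwa [map_add, map_add, hz0 r p hp, hz0 r q hq, add_zero, add_zero] at this
    have hcBcompat : ∀ (r : R) (a b : θ.Quotient), cB a b → cB (T r a) (T r b) := by
      intro r a b h
      rw [hTcB r a b h]
      exact cB.refl _
    rcases hcong cB hcBcompat with hid | hfl
    · apply hPbot
      rw [eq_bot_iff]
      intro p hp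
      have : cB p 0 := ⟨0, P.zero_mem, p, hp, by rw [add_zero, zero_add]⟩
      simpa using hid p 0 this
    · obtain ⟨r, a, hra⟩ := hRM
      apply hra
      have : T r a = T r 0 := hTcB r a 0 (hfl a 0)
      rwa [map_zero] at this
  haveI : Finite θ.Quotient := Quotient.finite _
  exact ⟨θ.Quotient, inferInstance, Fintype.ofFinite _, T, hRM, hsub, hcong⟩
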